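/- In the right-angled Coxeter group W with generators s_1,…,s_{2n}, relations s_j^2 = 1 and (s_i s_j)^2 = 1 for i < j, j ≠ i+n, the commutator subgroup [W,W] is generated by the elements (s_i s_{i+n})^2 for 1 ≤ i ≤ n. -/

import Mathlib

/-- Relators of the right-angled Coxeter group associated to the fan of an
`n`-step Bott tower: `s_j ^ 2` for all `j`, and `(s_i s_j) ^ 2` for all
`i < j` with `j ≠ i + n`. -/
def coxeterRels (n : ℕ) : Set (FreeGroup (Fin (2 * n))) :=
  {w | (∃ j : Fin (2 * n), w = (FreeGroup.of j) ^ 2) ∨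
    (∃ i j : Fin (2 * n), i < j ∧ j.val ≠ i.val + n ∧
      w = (FreeGroup.of i * FreeGroup.of j) ^ 2)}

section Aux
variable {n : ℕ}

lemma cox_rel_one {r : FreeGroup (Fin (2 * n))} (h : r ∈ coxeterRels n) :
    PresentedGroup.mk (coxeterRels n) r = 1 :=
  (QuotientGroup.eq_one_iff _).mpr (Subgroup.subset_normalClosure h)

lemma cox_sq (j : Fin (2 * n)) :
    (PresentedGroup.of j : PresentedGroup (coxeterRels n)) ^ 2 = 1 := by
  have := cox_rel_one (n := n) (Or.inl ⟨j, rfl⟩)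
  simp at this; exact this

lemma cox_pair_sq {i j : Fin (2 * n)} (h : i < j) (h2 : j.val ≠ i.val + n) :
    ((PresentedGroup.of i * PresentedGroup.of j : PresentedGroup (coxeterRels n))) ^ 2 = 1 := by
  have := cox_rel_one (n := n) (Or.inr ⟨i, j, h, h2, rfl⟩)
  simp at this; exact this

lemma comm_of_sq {G : Type*} [Group G] {a b : G} (ha : a ^ 2 = 1) (hb : b ^ 2 = 1)
    (hab : (a * b) ^ 2 = 1) : a * b = b * a := by
  have ha' : a⁻¹ = a := inv_eq_of_mul_eq_one_right (by rw [← sq]; exact ha)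
  have hb' : b⁻¹ = b := inv_eq_of_mul_eq_one_right (by rw [← sq]; exact hb)
  have h' : (a * b)⁻¹ = a * b := inv_eq_of_mul_eq_one_right (by rw [← sq]; exact hab)
  calc a * b = (a * b)⁻¹ := h'.symm
  _ = b⁻¹ * a⁻¹ := mul_inv_rev a b
  _ = b * a := by rw [ha', hb']

lemma cox_inv (j : Fin (2 * n)) :
    (PresentedGroup.of j : PresentedGroup (coxeterRels n))⁻¹ = PresentedGroup.of j :=
  inv_eq_of_mul_eq_one_right (by rw [← sq]; exact cox_sq j)

lemma cox_comm {i j : Fin (2 * n)} (hne : i ≠ j) (h1 : j.val ≠ i.val + n)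
    (h2 : i.val ≠ j.val + n) :
    (PresentedGroup.of i * PresentedGroup.of j : PresentedGroup (coxeterRels n))
      = PresentedGroup.of j * PresentedGroup.of i := by
  rcases hne.lt_or_gt with h | h
  · exact comm_of_sq (cox_sq i) (cox_sq j) (cox_pair_sq h h1)
  · exact (comm_of_sq (cox_sq j) (cox_sq i) (cox_pair_sq h h2)).symm

lemma lemA {G : Type*} [Group G] {a b : G} (ha : a ^ 2 = 1) (hb : b ^ 2 = 1) :
    a * (a * b) ^ 2 * a = ((a * b) ^ 2)⁻¹ := by
  have ha1 : a * a = 1 := by rw [← sq]; exact ha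
  have hb1 : b * b = 1 := by rw [← sq]; exact hb
  have ha' : a⁻¹ = a := inv_eq_of_mul_eq_one_right ha1
  have hb' : b⁻¹ = b := inv_eq_of_mul_eq_one_right hb1
  have ha2 : ∀ x : G, a * (a * x) = x := fun x => by rw [← mul_assoc, ha1, one_mul]
  rw [sq, mul_inv_rev, mul_inv_rev, ha', hb']
  simp only [mul_assoc, ha2]

lemma lemB {G : Type*} [Group G] {a b : G} (ha : a ^ 2 = 1) (hb : b ^ 2 = 1) :
    b * (a * b) ^ 2 * b = ((a * b) ^ 2)⁻¹ := by
  have ha1 : a * a = 1 := by rw [← sq]; exact ha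
  have hb1 : b * b = 1 := by rw [← sq]; exact hb
  have ha' : a⁻¹ = a := inv_eq_of_mul_eq_one_right ha1
  have hb' : b⁻¹ = b := inv_eq_of_mul_eq_one_right hb1
  rw [sq, mul_inv_rev, mul_inv_rev, ha', hb']
  simp only [mul_assoc, hb1, mul_one]

lemma lemC {G : Type*} [Group G] {a b j : G} (hj : j ^ 2 = 1) (hca : j * a = a * j)
    (hcb : j * b = b * j) : j * (a * b) ^ 2 * j = (a * b) ^ 2 := by
  have hc : Commute j ((a * b) ^ 2) :=
    ((show Commute j a from hca).mul_right (show Commute j b from hcb)).pow_right 2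
  rw [hc.eq, mul_assoc, ← sq, hj, mul_one]

end Aux

open scoped commutatorElement

theorem stmt_2 (n : ℕ) :
    commutator (PresentedGroup (coxeterRels n)) =
      Subgroup.closure {x : PresentedGroup (coxeterRels n) |
        ∃ i : Fin n,
          x = (PresentedGroup.of (⟨i.val, by omega⟩ : Fin (2 * n)) *
               PresentedGroup.of (⟨i.val + n, by omega⟩ : Fin (2 * n))) ^ 2} := by
  set W := PresentedGroup (coxeterRels n)
  set S : Set W := {x : W |
        ∃ i : Fin n,
          x = (PresentedGroup.of (⟨i.val, by omega⟩ : Fin (2 * n)) *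
               PresentedGroup.of (⟨i.val + n, by omega⟩ : Fin (2 * n))) ^ 2} with hS
  set N := Subgroup.closure S with hN
  -- Step 1: conjugation of elements of S by generators stays in N
  have key : ∀ (j : Fin (2 * n)), ∀ x ∈ S,
      PresentedGroup.of j * x * PresentedGroup.of j ∈ N := by
    rintro j x ⟨i, rfl⟩
    set a : Fin (2 * n) := ⟨i.val, by omega⟩ with hadef
    set b : Fin (2 * n) := ⟨i.val + n, by omega⟩ with hbdef
    have haval : a.val = i.val := rfl
    have hbval : b.val = i.val + n := rfl
    have hi : (i : ℕ) < n := i.isLt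
    have hjlt : (j : ℕ) < 2 * n := j.isLt
    have hmem : (PresentedGroup.of a * PresentedGroup.of b : W) ^ 2 ∈ N :=
      Subgroup.subset_closure ⟨i, rfl⟩
    by_cases hja : j = a
    · rw [hja, lemA (cox_sq a) (cox_sq b)]
      exact inv_mem hmem
    · by_cases hjb : j = b
      · rw [hjb, lemB (cox_sq a) (cox_sq b)]
        exact inv_mem hmem
      · have hja' : j.val ≠ a.val := fun h => hja (Fin.ext h)
        have hjb' : j.val ≠ b.val := fun h => hjb (Fin.ext h)
        have hca : (PresentedGroup.of j * PresentedGroup.of a : W)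
            = PresentedGroup.of a * PresentedGroup.of j :=
          cox_comm hja (by omega) (by omega)
        have hcb : (PresentedGroup.of j * PresentedGroup.of b : W)
            = PresentedGroup.of b * PresentedGroup.of j :=
          cox_comm hjb (by omega) (by omega)
        rw [lemC (cox_sq j) hca hcb]
        exact hmem
  -- Step 2: N is normal
  have hNormal : N.Normal := by
    rw [← Subgroup.normalizer_eq_top_iff, Subgroup.eq_top_iff']
    intro g
    refine PresentedGroup.generated_by _ _ (fun j => ?_) g
    have dir : ∀ h ∈ N, PresentedGroup.of j * h * (PresentedGroup.of j : W) ∈ N := by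
      intro h hh
      induction hh using Subgroup.closure_induction with
      | mem x hx => exact key j x hx
      | one =>
          have e : PresentedGroup.of j * 1 * (PresentedGroup.of j : W) = 1 := by
            rw [mul_one, ← sq]; exact cox_sq j
          rw [e]; exact one_mem N
      | mul x y hx hy px py =>
          have e : PresentedGroup.of j * (x * y) * (PresentedGroup.of j : W)
              = (PresentedGroup.of j * x * PresentedGroup.of j)
                * (PresentedGroup.of j * y * PresentedGroup.of j) := by
            have hj1 : (PresentedGroup.of j : W) * PresentedGroup.of j = 1 := by
              rw [← sq]; exact cox_sq j
            calc PresentedGroup.of j * (x * y) * (PresentedGroup.of j : W)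
                = PresentedGroup.of j * x * 1 * y * PresentedGroup.of j := by group
            _ = PresentedGroup.of j * x * (PresentedGroup.of j * PresentedGroup.of j)
                  * y * PresentedGroup.of j := by rw [hj1]
            _ = (PresentedGroup.of j * x * PresentedGroup.of j)
                * (PresentedGroup.of j * y * PresentedGroup.of j) := by group
          rw [e]; exact mul_mem px py
      | inv x hx px =>
          have e : PresentedGroup.of j * x⁻¹ * (PresentedGroup.of j : W)
              = (PresentedGroup.of j * x * PresentedGroup.of j)⁻¹ := by
            rw [mul_inv_rev, mul_inv_rev, cox_inv, mul_assoc]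
          rw [e]; exact inv_mem px
    rw [Subgroup.mem_normalizer_iff]
    intro h
    constructor
    · intro hh
      have := dir h hh
      rwa [cox_inv]
    · intro hh
      rw [cox_inv] at hh
      have h2 := dir _ hh
      have hj1 : (PresentedGroup.of j : W) * PresentedGroup.of j = 1 := by
        rw [← sq]; exact cox_sq j
      have e : PresentedGroup.of j * (PresentedGroup.of j * h * PresentedGroup.of j)
          * (PresentedGroup.of j : W) = h := by
        calc PresentedGroup.of j * (PresentedGroup.of j * h * PresentedGroup.of j)
            * (PresentedGroup.of j : W)
            = (PresentedGroup.of j * PresentedGroup.of j) * h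
              * (PresentedGroup.of j * PresentedGroup.of j) := by group
        _ = h := by rw [hj1]; group
      rwa [e] at h2
  -- Step 3: N ≤ commutator
  have le1 : N ≤ commutator W := by
    rw [hN, Subgroup.closure_le]
    rintro x ⟨i, rfl⟩
    set a : Fin (2 * n) := ⟨i.val, by omega⟩
    set b : Fin (2 * n) := ⟨i.val + n, by omega⟩
    have e : (PresentedGroup.of a * PresentedGroup.of b : W) ^ 2
        = ⁅(PresentedGroup.of a : W), PresentedGroup.of b⁆ := by
      rw [commutatorElement_def, cox_inv, cox_inv, sq, ← mul_assoc]
    simp only [SetLike.mem_coe]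
    rw [e]
    exact Subgroup.commutator_mem_commutator (Subgroup.mem_top _) (Subgroup.mem_top _)
  -- Step 4: commutator ≤ N
  have le2 : commutator W ≤ N := by
    rw [commutator_def, Subgroup.commutator_le]
    intro g _ h _
    letI := hNormal
    rw [← QuotientGroup.eq_one_iff (G := W) (N := N)]
    have e : ((⁅g, h⁆ : W) : W ⧸ N) = ⁅(g : W ⧸ N), (h : W ⧸ N)⁆ := by
      simp [commutatorElement_def, QuotientGroup.mk_mul, QuotientGroup.mk_inv]
    rw [e, commutatorElement_eq_one_iff_mul_comm]
    have gen : ∀ x : W ⧸ N, x ∈ Subgroup.closure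
        (Set.range (fun j : Fin (2 * n) => ((PresentedGroup.of j : W) : W ⧸ N))) := by
      intro x
      obtain ⟨y, rfl⟩ := QuotientGroup.mk_surjective x
      have hy : y ∈ Subgroup.closure (Set.range (PresentedGroup.of : Fin (2*n) → W)) := by
        rw [PresentedGroup.closure_range_of]; trivial
      induction hy using Subgroup.closure_induction with
      | mem z hz =>
          obtain ⟨j, rfl⟩ := hz
          exact Subgroup.subset_closure ⟨j, rfl⟩
      | one => rw [QuotientGroup.mk_one]; exact one_mem _
      | mul u v _ _ pu pv => rw [QuotientGroup.mk_mul]; exact mul_mem pu pv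
      | inv u _ pu => rw [QuotientGroup.mk_inv]; exact inv_mem pu
    have base : ∀ i j : Fin (2 * n),
        ((PresentedGroup.of i : W) : W ⧸ N) * ((PresentedGroup.of j : W) : W ⧸ N)
          = ((PresentedGroup.of j : W) : W ⧸ N) * ((PresentedGroup.of i : W) : W ⧸ N) := by
      intro i j
      have hsq : ∀ k : Fin (2 * n), (((PresentedGroup.of k : W) : W ⧸ N)) ^ 2 = 1 := by
        intro k
        rw [← QuotientGroup.mk_pow, cox_sq, QuotientGroup.mk_one]
      by_cases hij : i = j
      · rw [hij]
      · by_cases h1 : j.val = i.val + n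
        · have hi : i.val < n := by have := j.isLt; omega
          have e1 : (⟨i.val, by omega⟩ : Fin (2 * n)) = i := Fin.ext rfl
          have e2 : (⟨((⟨i.val, hi⟩ : Fin n) : ℕ) + n, by omega⟩ : Fin (2 * n)) = j :=
            Fin.ext (by simp [h1])
          have hmem : (PresentedGroup.of i * PresentedGroup.of j : W) ^ 2 ∈ N := by
            apply Subgroup.subset_closure
            exact ⟨⟨i.val, hi⟩, by rw [e1, e2]⟩
          have hq : (((PresentedGroup.of i : W) : W ⧸ N)
              * ((PresentedGroup.of j : W) : W ⧸ N)) ^ 2 = 1 := by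
            rw [← QuotientGroup.mk_mul, ← QuotientGroup.mk_pow]
            exact (QuotientGroup.eq_one_iff _).mpr hmem
          exact comm_of_sq (hsq i) (hsq j) hq
        · by_cases h2 : i.val = j.val + n
          · have hj : j.val < n := by have := i.isLt; omega
            have e1 : (⟨j.val, by omega⟩ : Fin (2 * n)) = j := Fin.ext rfl
            have e2 : (⟨((⟨j.val, hj⟩ : Fin n) : ℕ) + n, by omega⟩ : Fin (2 * n)) = i :=
              Fin.ext (by simp [h2])
            have hmem : (PresentedGroup.of j * PresentedGroup.of i : W) ^ 2 ∈ N := by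
              apply Subgroup.subset_closure
              exact ⟨⟨j.val, hj⟩, by rw [e1, e2]⟩
            have hq : (((PresentedGroup.of j : W) : W ⧸ N)
                * ((PresentedGroup.of i : W) : W ⧸ N)) ^ 2 = 1 := by
              rw [← QuotientGroup.mk_mul, ← QuotientGroup.mk_pow]
              exact (QuotientGroup.eq_one_iff _).mpr hmem
            exact (comm_of_sq (hsq j) (hsq i) hq).symm
          · have hc := cox_comm (n := n) hij h1 h2
            calc ((PresentedGroup.of i : W) : W ⧸ N) * ((PresentedGroup.of j : W) : W ⧸ N)
                = ((PresentedGroup.of i * PresentedGroup.of j : W) : W ⧸ N) := by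
                  rw [QuotientGroup.mk_mul]
            _ = ((PresentedGroup.of j * PresentedGroup.of i : W) : W ⧸ N) := by rw [hc]
            _ = ((PresentedGroup.of j : W) : W ⧸ N) * ((PresentedGroup.of i : W) : W ⧸ N) := by
                  rw [QuotientGroup.mk_mul]
    refine Subgroup.closure_induction₂
      (p := fun x y _ _ => x * y = y * x) ?_ ?_ ?_ ?_ ?_ ?_ ?_ (gen _) (gen _)
    · rintro _ _ ⟨i, rfl⟩ ⟨j, rfl⟩; exact base i j
    · intro x _; rw [one_mul, mul_one]
    · intro x _; rw [one_mul, mul_one]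
    · intro x y z _ _ _ p1 p2
      calc x * y * z = x * (y * z) := by rw [mul_assoc]
      _ = x * (z * y) := by rw [p2]
      _ = (x * z) * y := by rw [mul_assoc]
      _ = (z * x) * y := by rw [p1]
      _ = z * (x * y) := by rw [mul_assoc]
    · intro y z x _ _ _ p1 p2
      calc x * (y * z) = (x * y) * z := by rw [← mul_assoc]
      _ = (y * x) * z := by rw [p1]
      _ = y * (x * z) := by rw [mul_assoc]
      _ = y * (z * x) := by rw [p2]
      _ = (y * z) * x := by rw [← mul_assoc]
    · intro x y _ _ p
      have h' : x⁻¹ * y = y * x⁻¹ := by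
        have := congrArg (fun t => x⁻¹ * t * x⁻¹) p
        simpa [mul_assoc] using this.symm
      exact h'
    · intro x y _ _ p
      have h' : x * y⁻¹ = y⁻¹ * x := by
        have := congrArg (fun t => y⁻¹ * t * y⁻¹) p
        simpa [mul_assoc] using this.symm
      exact h'
  exact le_antisymm le2 le1
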